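/- Let f : ℝ → ℝ be locally Lipschitz and let x : ℝ → ℝ be a nonconstant differentiable function with x'(t) = f(x(t)) for all t ∈ ℝ, such that x is bounded. Then x is strictly monotone, the limits L₋ = lim_{t→−∞} x(t) and L₊ = lim_{t→+∞} x(t) exist, f(L₋) = 0, f(L₊) = 0, and L₋ ≠ L₊. (That is, every nonconstant bounded orbit of a scalar autonomous ODE is a heteroclinic orbit between two distinct equilibria.) -/

import Mathlib

open Filter Set Topology

/-- If a solution of `ẋ = f(x)` (with continuous `f`) converges at `+∞`, then the limit
is an equilibrium. -/
private lemma key_limit (f : ℝ → ℝ) (hfc : Continuous f) (x : ℝ → ℝ)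
    (hode : ∀ t : ℝ, HasDerivAt x (f (x t)) t) {L : ℝ}
    (hL : Filter.Tendsto x Filter.atTop (nhds L)) : f L = 0 := by
  have hxc' : Continuous x := continuous_iff_continuousAt.mpr
    fun t => (hode t).differentiableAt.continuousAt
  have h : ∀ n : ℕ, ∃ c ∈ Ioo (n : ℝ) (n + 1),
      f (x c) = (x (n + 1) - x n) / ((n + 1 : ℝ) - n) := by
    intro n
    exact exists_hasDerivAt_eq_slope x (fun t => f (x t)) (by linarith)
      hxc'.continuousOn (fun t _ => hode t)
  choose c hc hslope using h
  have hcat : Tendsto c atTop atTop :=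
    tendsto_atTop_mono (fun n => (hc n).1.le) tendsto_natCast_atTop_atTop
  have h1 : Tendsto (fun n : ℕ => f (x (c n))) atTop (𝓝 (f L)) :=
    (hfc.tendsto L).comp (hL.comp hcat)
  have h2 : Tendsto (fun n : ℕ => f (x (c n))) atTop (𝓝 0) := by
    have e : (fun n : ℕ => f (x (c n))) =
        fun n : ℕ => (x ((n : ℝ) + 1) - x n) / (((n : ℝ) + 1) - n) := funext hslope
    rw [e]
    have h3 : Tendsto (fun n : ℕ => x ((n : ℝ) + 1)) atTop (𝓝 L) :=
      hL.comp (tendsto_atTop_add_const_right _ 1 tendsto_natCast_atTop_atTop)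
    have h4 : Tendsto (fun n : ℕ => x (n : ℝ)) atTop (𝓝 L) :=
      hL.comp tendsto_natCast_atTop_atTop
    have := (h3.sub h4)
    simp only [sub_self] at this
    simpa [add_sub_cancel_left] using this
  exact tendsto_nhds_unique h1 h2

/-- A nonconstant solution never hits an equilibrium. -/
private lemma no_zero (f : ℝ → ℝ) (hf : LocallyLipschitz f) (x : ℝ → ℝ)
    (hode : ∀ t : ℝ, HasDerivAt x (f (x t)) t)
    (hnc : ∃ s t : ℝ, x s ≠ x t) : ∀ t : ℝ, f (x t) ≠ 0 := by
  intro t₀ h0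
  set L := x t₀ with hLdef
  obtain ⟨K, u, hu, hKu⟩ := hf L
  have hxc : Continuous x := continuous_iff_continuousAt.mpr
    fun t => (hode t).differentiableAt.continuousAt
  have hSopen : IsOpen {t : ℝ | x t = L} := by
    rw [isOpen_iff_mem_nhds]
    intro t₁ ht₁
    have hxt : x t₁ = L := ht₁
    have huniq : x =ᶠ[𝓝 t₁] fun _ => L := by
      refine ODE_solution_unique_of_eventually (v := fun _ y => f y) (s := fun _ => u)
        (Eventually.of_forall fun _ => hKu) ?_ ?_ (by simp [hxt])
      · have hmem : ∀ᶠ t in 𝓝 t₁, x t ∈ u := by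
          have hcont : Filter.Tendsto x (𝓝 t₁) (𝓝 (x t₁)) := hxc.continuousAt
          exact hcont (hxt ▸ hu)
        exact hmem.mono fun t ht => ⟨hode t, ht⟩
      · refine Eventually.of_forall fun t => ⟨?_, mem_of_mem_nhds hu⟩
        have : HasDerivAt (fun _ : ℝ => L) 0 t := hasDerivAt_const t L
        simpa [h0] using this
    exact huniq.mono fun t ht => ht
  have hSclosed : IsClosed {t : ℝ | x t = L} := isClosed_eq hxc continuous_const
  have hSne : ({t : ℝ | x t = L}).Nonempty := ⟨t₀, rfl⟩
  have hS : {t : ℝ | x t = L} = univ := by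
    rcases isClopen_iff.mp ⟨hSclosed, hSopen⟩ with h | h
    · exact absurd (h ▸ hSne) (by simp)
    · exact h
  obtain ⟨s, t, hst⟩ := hnc
  have hs : x s = L := by have := hS ▸ (mem_univ s); exact this
  have ht : x t = L := by have := hS ▸ (mem_univ t); exact this
  exact hst (hs.trans ht.symm)

/-- Every nonconstant bounded orbit of a scalar autonomous ODE (with locally
Lipschitz right-hand side) is a heteroclinic orbit between two distinct
equilibria. -/
theorem stmt_6 (f : ℝ → ℝ) (hf : LocallyLipschitz f) (x : ℝ → ℝ)
    (hode : ∀ t : ℝ, HasDerivAt x (f (x t)) t)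
    (hnc : ∃ s t : ℝ, x s ≠ x t)
    (hbdd : ∃ C : ℝ, ∀ t : ℝ, |x t| ≤ C) :
    (StrictMono x ∨ StrictAnti x) ∧
    ∃ Lm Lp : ℝ,
      Filter.Tendsto x Filter.atBot (nhds Lm) ∧
      Filter.Tendsto x Filter.atTop (nhds Lp) ∧
      f Lm = 0 ∧ f Lp = 0 ∧ Lm ≠ Lp := by
  obtain ⟨C, hC⟩ := hbdd
  have hxc : Continuous x := continuous_iff_continuousAt.mpr
    fun t => (hode t).differentiableAt.continuousAt
  have hfc : Continuous f := hf.continuous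
  have hne := no_zero f hf x hode hnc
  have hda : ∀ t, deriv x t = f (x t) := fun t => (hode t).deriv
  have hBa : BddAbove (range x) := ⟨C, by rintro y ⟨t, rfl⟩; exact (abs_le.mp (hC t)).2⟩
  have hBb : BddBelow (range x) := ⟨-C, by rintro y ⟨t, rfl⟩; exact (abs_le.mp (hC t)).1⟩
  -- the limit at -∞ is an equilibrium, given convergence
  have key_bot : ∀ L : ℝ, Filter.Tendsto x Filter.atBot (nhds L) → f L = 0 := by
    intro L hL
    have hodey : ∀ t : ℝ, HasDerivAt (fun s => x (-s)) (-(f (x (-t)))) t := by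
      intro t
      have := (hode (-t)).comp t (hasDerivAt_neg t)
      exact this.congr_deriv (by ring)
    have hLy : Filter.Tendsto (fun s => x (-s)) Filter.atTop (nhds L) :=
      hL.comp tendsto_neg_atTop_atBot
    have := key_limit (fun y => -(f y)) hfc.neg (fun s => x (-s)) hodey hLy
    simpa [neg_eq_zero] using this
  have hsign : (∀ t, 0 < f (x t)) ∨ (∀ t, f (x t) < 0) := by
    rcases lt_or_gt_of_ne (hne 0) with h | h
    · right
      intro t
      rcases lt_or_gt_of_ne (hne t) with h' | h'
      · exact h'
      · exfalso
        obtain ⟨s, hs⟩ := intermediate_value_univ 0 t (hfc.comp hxc) ⟨h.le, h'.le⟩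
        exact hne s hs
    · left
      intro t
      rcases lt_or_gt_of_ne (hne t) with h' | h'
      · exfalso
        obtain ⟨s, hs⟩ := intermediate_value_univ t 0 (hfc.comp hxc) ⟨h'.le, h.le⟩
        exact hne s hs
      · exact h'
  rcases hsign with hpos | hneg
  · have hmono : StrictMono x := strictMono_of_deriv_pos fun t => by
      rw [hda]; exact hpos t
    have hLm : Filter.Tendsto x Filter.atBot (nhds (⨅ t, x t)) :=
      tendsto_atBot_ciInf hmono.monotone hBb
    have hLp : Filter.Tendsto x Filter.atTop (nhds (⨆ t, x t)) :=
      tendsto_atTop_ciSup hmono.monotone hBa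
    refine ⟨Or.inl hmono, ⨅ t, x t, ⨆ t, x t, hLm, hLp, key_bot _ hLm,
      key_limit f hfc x hode hLp, ?_⟩
    have h1 : (⨅ t, x t) ≤ x 0 :=
      le_of_tendsto hLm ((eventually_le_atBot (0 : ℝ)).mono fun t ht => hmono.monotone ht)
    have h2 : x 1 ≤ ⨆ t, x t :=
      ge_of_tendsto hLp ((eventually_ge_atTop (1 : ℝ)).mono fun t ht => hmono.monotone ht)
    have h3 : x 0 < x 1 := hmono zero_lt_one
    exact ne_of_lt (by linarith)
  · have hanti : StrictAnti x := strictAnti_of_deriv_neg fun t => by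
      rw [hda]; exact hneg t
    have hLm : Filter.Tendsto x Filter.atBot (nhds (⨆ t, x t)) :=
      tendsto_atBot_ciSup hanti.antitone hBa
    have hLp : Filter.Tendsto x Filter.atTop (nhds (⨅ t, x t)) :=
      tendsto_atTop_ciInf hanti.antitone hBb
    refine ⟨Or.inr hanti, ⨆ t, x t, ⨅ t, x t, hLm, hLp, key_bot _ hLm,
      key_limit f hfc x hode hLp, ?_⟩
    have h1 : x 0 ≤ ⨆ t, x t :=
      ge_of_tendsto hLm ((eventually_le_atBot (0 : ℝ)).mono fun t ht => hanti.antitone ht)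
    have h2 : (⨅ t, x t) ≤ x 1 :=
      le_of_tendsto hLp ((eventually_ge_atTop (1 : ℝ)).mono fun t ht => hanti.antitone ht)
    have h3 : x 1 < x 0 := hanti zero_lt_one
    exact ne_of_gt (by linarith)
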